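/- Let ℓ ≥ 4 and let G be a balanced ℓ-partite graph with parts V1, ..., Vℓ each of size n, with all pairwise edge densities d(V_i,V_j) ≥ 1/2, and suppose G contains no triangle. Then every independent set X of G satisfies |X| ≤ (ℓ+1)n/2. -/

import Mathlib

open SimpleGraph Finset

private lemma card_interedges_sum' {α : Type*} [DecidableEq α] (G : SimpleGraph α)
    [DecidableRel G.Adj] (s t : Finset α) :
    #(Rel.interedges G.Adj s t) = ∑ v ∈ s, #(t.filter (G.Adj v)) := by
  rw [Rel.interedges_eq_biUnion, card_biUnion]
  · simp
  · intro p hp q hq hpq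
    rw [Function.onFun, Finset.disjoint_left]
    rintro z hz1 hz2
    simp only [mem_map, Function.Embedding.coeFn_mk] at hz1 hz2
    obtain ⟨a, ha, rfl⟩ := hz1
    obtain ⟨b, hb, hba⟩ := hz2
    exact hpq (congrArg Prod.fst hba).symm

private lemma key' {α : Type*} [Fintype α] [DecidableEq α] {ℓ n : ℕ}
    (G : SimpleGraph α) [DecidableRel G.Adj] (V : Fin ℓ → Finset α)
    (hcard : ∀ i, (V i).card = n) (hn : 0 < n)
    (hdens : ∀ i j, i ≠ j → (1 : ℚ) / 2 ≤ G.edgeDensity (V i) (V j))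
    (htf : G.CliqueFree 3) :
    ∀ S : Finset (Fin ℓ), ∀ Y : Finset α, (∀ x ∈ Y, ∀ y ∈ Y, ¬ G.Adj x y) →
      ∑ m ∈ S, ((Y ∩ V m).card : ℚ) ≤ ((S.card : ℚ) + 1) * n / 2 := by
  intro S
  induction S using Finset.strongInduction with
  | _ S IH =>
    intro Y hY
    rcases S.eq_empty_or_nonempty with rfl | hS
    · simp
      positivity
    obtain ⟨l, hl, hmax⟩ := S.exists_max_image (fun m => (Y ∩ V m).card) hS
    set x : ℕ := (Y ∩ V l).card with hxdef
    have hxn : (x : ℚ) ≤ n := by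
      exact_mod_cast (hcard l) ▸ Finset.card_le_card (Finset.inter_subset_right)
    by_cases hxled : (x : ℚ) ≤ (n : ℚ) / 2
    · have h1 : ∑ m ∈ S, ((Y ∩ V m).card : ℚ) ≤ ∑ m ∈ S, (x : ℚ) :=
        Finset.sum_le_sum fun m hm => by exact_mod_cast hmax m hm
      rw [Finset.sum_const, nsmul_eq_mul] at h1
      have h2 : (0 : ℚ) ≤ (S.card : ℚ) := by positivity
      have h3 : (0 : ℚ) ≤ (n : ℚ) := by positivity
      nlinarith [mul_le_mul_of_nonneg_left hxled h2]
    push_neg at hxled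
    -- notation
    set e : Finset (Fin ℓ) := S.erase l with hedef
    set r' : ℕ := e.card with hrdef
    have hcS : S.card = r' + 1 := (Finset.card_erase_add_one hl).symm
    set σ : ℚ := ∑ m ∈ S, ((Y ∩ V m).card : ℚ) with hσdef
    have hσe : ∑ m ∈ e, ((Y ∩ V m).card : ℚ) = σ - x := by
      have := Finset.sum_erase_add S (fun m => ((Y ∩ V m).card : ℚ)) hl
      rw [hσdef]
      linarith [this]
    -- density lower bound for each m ∈ e
    have hA : ∀ m ∈ e, (n : ℚ) * n / 2 ≤ ∑ v ∈ V l, (((V m).filter (G.Adj v)).card : ℚ) := by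
      intro m hm
      have hne : l ≠ m := (Finset.ne_of_mem_erase hm).symm
      have hd := hdens l m hne
      rw [SimpleGraph.edgeDensity_def, hcard l, hcard m] at hd
      have hpos : (0 : ℚ) < (n : ℚ) * n := by positivity
      rw [div_le_div_iff₀ (by norm_num) hpos] at hd
      have hcint : #(G.interedges (V l) (V m)) = ∑ v ∈ V l, #((V m).filter (G.Adj v)) :=
        card_interedges_sum' G (V l) (V m)
      have : ((#(G.interedges (V l) (V m)) : ℚ)) = ∑ v ∈ V l, (((V m).filter (G.Adj v)).card : ℚ) := by
        rw [hcint]; push_cast; rfl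
      linarith [this ▸ hd]
    -- per-vertex bound for Y-vertices
    have hB : ∀ v ∈ (V l).filter (· ∈ Y), ∀ m ∈ e,
        (((V m).filter (G.Adj v)).card : ℚ) ≤ (n : ℚ) - ((Y ∩ V m).card : ℚ) := by
      intro v hv m hm
      rw [Finset.mem_filter] at hv
      have hdisj : Disjoint ((V m).filter (G.Adj v)) (Y ∩ V m) := by
        rw [Finset.disjoint_left]
        intro u hu1 hu2
        rw [Finset.mem_filter] at hu1
        exact hY v hv.2 u (Finset.mem_of_mem_inter_left hu2) hu1.2
      have hsub : ((V m).filter (G.Adj v)) ∪ (Y ∩ V m) ⊆ V m :=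
        Finset.union_subset (Finset.filter_subset _ _) (Finset.inter_subset_right)
      have hcu := Finset.card_le_card hsub
      rw [Finset.card_union_of_disjoint hdisj, hcard m] at hcu
      have := (Nat.cast_le (α := ℚ)).2 hcu
      push_cast at this
      linarith
    -- per-vertex bound for all vertices, via IH applied to neighborhoods
    have hC : ∀ v : α, ∑ m ∈ e, (((V m).filter (G.Adj v)).card : ℚ) ≤ ((r' : ℚ) + 1) * n / 2 := by
      intro v
      have hind : ∀ a ∈ G.neighborFinset v, ∀ b ∈ G.neighborFinset v, ¬ G.Adj a b := by
        intro a ha b hb hab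
        rw [SimpleGraph.mem_neighborFinset] at ha hb
        exact htf {v, a, b} (SimpleGraph.is3Clique_triple_iff.mpr ⟨ha, hb, hab⟩)
      have := IH e (Finset.erase_ssubset hl) (G.neighborFinset v) hind
      rw [hrdef]
      refine le_trans (le_of_eq ?_) this
      apply Finset.sum_congr rfl
      intro m hm
      congr 1
      congr 1
      ext u
      simp only [Finset.mem_filter, Finset.mem_inter, SimpleGraph.mem_neighborFinset]
      tauto
    -- double counting
    set F : α → ℚ := fun v => ∑ m ∈ e, (((V m).filter (G.Adj v)).card : ℚ) with hFdef
    have hlow : (r' : ℚ) * ((n : ℚ) * n / 2) ≤ ∑ v ∈ V l, F v := by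
      have : ∑ v ∈ V l, F v = ∑ m ∈ e, ∑ v ∈ V l, (((V m).filter (G.Adj v)).card : ℚ) :=
        Finset.sum_comm
      rw [this]
      calc (r' : ℚ) * ((n : ℚ) * n / 2) = ∑ _m ∈ e, ((n : ℚ) * n / 2) := by
            rw [Finset.sum_const, nsmul_eq_mul, hrdef]
        _ ≤ _ := Finset.sum_le_sum hA
    -- upper bound
    have hsplit : ∑ v ∈ (V l).filter (· ∈ Y), F v + ∑ v ∈ (V l).filter (¬ · ∈ Y), F v
        = ∑ v ∈ V l, F v := Finset.sum_filter_add_sum_filter_not (V l) (· ∈ Y) F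
    have hcf1 : ((V l).filter (· ∈ Y)).card = x := by
      rw [hxdef]
      congr 1
      ext u
      simp [Finset.mem_filter, Finset.mem_inter, and_comm]
    have hcf2 : (((V l).filter (¬ · ∈ Y)).card : ℚ) = (n : ℚ) - x := by
      have h := Finset.card_filter_add_card_filter_not (s := V l) (p := (· ∈ Y))
      rw [hcard l, hcf1] at h
      have h2 : ((V l).filter (¬ · ∈ Y)).card = n - x := by omega
      rw [h2]
      have hxle : x ≤ n := by omega
      push_cast [hxle]
      ring
    have hup1 : ∑ v ∈ (V l).filter (· ∈ Y), F v ≤ (x : ℚ) * ((r' : ℚ) * n - (σ - x)) := by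
      have hb : ∀ v ∈ (V l).filter (· ∈ Y), F v ≤ (r' : ℚ) * n - (σ - x) := by
        intro v hv
        have h1 : F v ≤ ∑ m ∈ e, ((n : ℚ) - ((Y ∩ V m).card : ℚ)) :=
          Finset.sum_le_sum (hB v hv)
        rw [Finset.sum_sub_distrib, Finset.sum_const, nsmul_eq_mul, hσe] at h1
        rw [hrdef]
        linarith
      have := Finset.sum_le_card_nsmul _ _ _ hb
      rw [nsmul_eq_mul, hcf1] at this
      exact this
    have hup2 : ∑ v ∈ (V l).filter (¬ · ∈ Y), F v ≤ ((n : ℚ) - x) * (((r' : ℚ) + 1) * n / 2) := by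
      have hb : ∀ v ∈ (V l).filter (¬ · ∈ Y), F v ≤ ((r' : ℚ) + 1) * n / 2 := fun v _ => hC v
      have := Finset.sum_le_card_nsmul _ _ _ hb
      rw [nsmul_eq_mul, hcf2] at this
      exact this
    have hmain : (r' : ℚ) * ((n : ℚ) * n / 2) ≤
        (x : ℚ) * ((r' : ℚ) * n - (σ - x)) + ((n : ℚ) - x) * (((r' : ℚ) + 1) * n / 2) := by
      linarith [hlow, hsplit, hup1, hup2]
    have hx0 : (0 : ℚ) < x := lt_of_le_of_lt (by positivity) hxled
    show σ ≤ ((S.card : ℚ) + 1) * n / 2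
    rw [hcS]
    push_cast
    nlinarith [hmain, hx0, hxn, hxled,
      mul_nonneg (sub_nonneg.2 hxn) (le_of_lt (sub_pos.2 hxled))]

theorem stmt5 {α : Type*} [Fintype α] [DecidableEq α] {ℓ n : ℕ} (hl : 4 ≤ ℓ)
    (G : SimpleGraph α) [DecidableRel G.Adj] (V : Fin ℓ → Finset α)
    (hpart : ∀ v : α, ∃! i, v ∈ V i)
    (hind : ∀ i, ∀ x ∈ V i, ∀ y ∈ V i, ¬ G.Adj x y)
    (hcard : ∀ i, (V i).card = n) (hn : 0 < n)
    (hdens : ∀ i j, i ≠ j → (1 : ℚ) / 2 ≤ G.edgeDensity (V i) (V j))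
    (htf : G.CliqueFree 3)
    (X : Finset α) (hX : ∀ x ∈ X, ∀ y ∈ X, ¬ G.Adj x y) :
    (X.card : ℚ) ≤ ((ℓ : ℚ) + 1) * n / 2 := by
  classical
  have hfib : X.card = ∑ m ∈ Finset.univ, (X ∩ V m).card := by
    have hmem : ∀ a ∈ X, (hpart a).choose ∈ (Finset.univ : Finset (Fin ℓ)) :=
      fun a _ => Finset.mem_univ _
    rw [Finset.card_eq_sum_card_fiberwise hmem]
    apply Finset.sum_congr rfl
    intro m _
    congr 1
    ext a
    simp only [Finset.mem_filter, Finset.mem_inter]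
    constructor
    · rintro ⟨ha, rfl⟩
      exact ⟨ha, (hpart a).choose_spec.1⟩
    · rintro ⟨ha, hm⟩
      exact ⟨ha, ((hpart a).choose_spec.2 m hm).symm⟩
  calc (X.card : ℚ) = ∑ m ∈ Finset.univ, ((X ∩ V m).card : ℚ) := by
        rw [hfib]; push_cast; rfl
    _ ≤ (((Finset.univ : Finset (Fin ℓ)).card : ℚ) + 1) * n / 2 :=
        key' G V hcard hn hdens htf Finset.univ X hX
    _ = ((ℓ : ℚ) + 1) * n / 2 := by rw [Finset.card_univ, Fintype.card_fin]
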